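/- Let f : (0,∞) → (0,∞) be operator monotone, symmetric (f(x) = x·f(1/x) for all x > 0) and normalized (f(1) = 1). Then for every x > 0, 2x/(1+x) ≤ f(x) ≤ (1+x)/2. -/

import Mathlib

open Matrix
open scoped ComplexOrder

/-- A function `f : ℝ → ℝ` is operator monotone on `(0,∞)` if for every `n` and all
positive-definite (Hermitian) complex `n×n` matrices `A, B` with `B − A` positive
semidefinite, the matrix `f(B) − f(A)` is positive semidefinite, where `f` is applied
through the functional calculus for Hermitian matrices (on the eigenvalues). -/
def OperatorMonotoneOn (f : ℝ → ℝ) : Prop :=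
  ∀ (n : ℕ) (A B : Matrix (Fin n) (Fin n) ℂ) (hA : A.PosDef) (hB : B.PosDef),
    (B - A).PosSemidef → ((hB.1.cfc f) - (hA.1.cfc f)).PosSemidef

namespace OpMono15

noncomputable def mk2 (p r q : ℝ) : Matrix (Fin 2) (Fin 2) ℂ := !![(p:ℂ), (r:ℂ); (r:ℂ), (q:ℂ)]

noncomputable def rot (a b c s : ℝ) : Matrix (Fin 2) (Fin 2) ℂ :=
  mk2 (c^2*a + s^2*b) ((a-b)*(c*s)) (s^2*a + c^2*b)

lemma herm_mk2 (p r q : ℝ) : (mk2 p r q).IsHermitian := by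
  rw [Matrix.IsHermitian]
  ext i j
  fin_cases i <;> fin_cases j <;> simp [mk2, Matrix.conjTranspose_apply]

lemma quadform_mk2 (p r q c s : ℝ) (v : Fin 2 → ℂ) :
    dotProduct (star v) ((mk2 p r q) *ᵥ v) =
      Complex.ofReal (p * Complex.normSq (v 0) + q * Complex.normSq (v 1)
        + 2 * r * ((v 0).re * (v 1).re + (v 0).im * (v 1).im)) := by
  simp [mk2, dotProduct, Matrix.mulVec, Fin.sum_univ_two, Complex.ext_iff, Complex.normSq_apply]
  constructor <;> ring

lemma posSemidef_mk2 {p q r : ℝ} (hp : 0 < p) (hd : 0 ≤ p * q - r ^ 2) :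
    (mk2 p r q).PosSemidef := by
  refine Matrix.PosSemidef.of_dotProduct_mulVec_nonneg (herm_mk2 p r q) fun v => ?_
  rw [quadform_mk2 p r q 0 0, Complex.zero_le_real, Complex.normSq_apply, Complex.normSq_apply]
  nlinarith [sq_nonneg (p * (v 0).re + r * (v 1).re), sq_nonneg (p * (v 0).im + r * (v 1).im),
    mul_nonneg hd (add_nonneg (sq_nonneg (v 1).re) (sq_nonneg (v 1).im)), hp.le,
    sq_nonneg ((v 1).re), sq_nonneg ((v 1).im)]

lemma posDef_mk2 {p q r : ℝ} (hp : 0 < p) (hd : 0 < p * q - r ^ 2) :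
    (mk2 p r q).PosDef := by
  refine Matrix.PosDef.of_dotProduct_mulVec_pos (herm_mk2 p r q) fun v hv => ?_
  rw [quadform_mk2 p r q 0 0, Complex.zero_lt_real, Complex.normSq_apply, Complex.normSq_apply]
  have hv' : v 0 ≠ 0 ∨ v 1 ≠ 0 := by
    by_contra h
    push_neg at h
    exact hv (funext fun i => by fin_cases i <;> simp [h.1, h.2])
  have main : ∀ w : Fin 2 → ℂ, w 1 ≠ 0 →
      0 < p * ((w 0).re * (w 0).re + (w 0).im * (w 0).im)
        + q * ((w 1).re * (w 1).re + (w 1).im * (w 1).im)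
        + 2 * r * ((w 0).re * (w 1).re + (w 0).im * (w 1).im) := by
    intro w hw
    have h1' : 0 < (w 1).re ^ 2 + (w 1).im ^ 2 := by
      have := Complex.normSq_pos.mpr hw
      rw [Complex.normSq_apply] at this; nlinarith
    nlinarith [sq_nonneg (p * (w 0).re + r * (w 1).re), sq_nonneg (p * (w 0).im + r * (w 1).im),
      mul_pos hd h1', hp]
  rcases eq_or_ne (v 1) 0 with h1 | h1
  · rcases hv' with h | h
    · have h0 : 0 < (v 0).re ^ 2 + (v 0).im ^ 2 := by
        have := Complex.normSq_pos.mpr h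
        rw [Complex.normSq_apply] at this; nlinarith
      simp [h1]
      nlinarith
    · exact absurd h1 h
  · exact main v h1

lemma mk2_quadform {p r q : ℝ} (h : (mk2 p r q).PosSemidef) (c s : ℝ) :
    0 ≤ p * c ^ 2 + 2 * r * c * s + q * s ^ 2 := by
  have h0 := h.dotProduct_mulVec_nonneg ![(c:ℂ), (s:ℂ)]
  rw [quadform_mk2 p r q 0 0] at h0
  rw [Complex.zero_le_real] at h0
  simp only [Matrix.cons_val_zero, Matrix.cons_val_one, Matrix.head_cons, Complex.ofReal_re,
    Complex.ofReal_im, Complex.normSq_apply] at h0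
  nlinarith [h0]

lemma mk2_sub (p r q p' r' q' : ℝ) :
    mk2 p r q - mk2 p' r' q' = mk2 (p - p') (r - r') (q - q') := by
  ext i j
  fin_cases i <;> fin_cases j <;> simp [mk2] <;> push_cast <;> ring

lemma one_mk2 : (1 : Matrix (Fin 2) (Fin 2) ℂ) = mk2 1 0 1 := by
  ext i j
  fin_cases i <;> fin_cases j <;> simp [mk2, Matrix.one_apply]

lemma diag_mul (x y x' y' : ℝ) : mk2 x 0 y * mk2 x' 0 y' = mk2 (x*x') 0 (y*y') := by
  ext i j
  fin_cases i <;> fin_cases j <;>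
    simp [mk2, Matrix.mul_apply, Fin.sum_univ_two] <;> push_cast <;> ring

lemma diag_inv {x y : ℝ} (hx : x ≠ 0) (hy : y ≠ 0) :
    (mk2 x 0 y)⁻¹ = mk2 x⁻¹ 0 y⁻¹ := by
  apply Matrix.inv_eq_right_inv
  rw [diag_mul, mul_inv_cancel₀ hx, mul_inv_cancel₀ hy, ← one_mk2]

lemma rot_mul {a b a' b' c s : ℝ} (hcs : c^2 + s^2 = 1) :
    rot a b c s * rot a' b' c s = rot (a*a') (b*b') c s := by
  have hcs' : (c:ℂ)^2 + (s:ℂ)^2 = 1 := by exact_mod_cast hcs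
  ext i j
  fin_cases i <;> fin_cases j <;>
    (simp [rot, mk2, Matrix.mul_apply, Fin.sum_univ_two]; push_cast)
  · linear_combination ((a:ℂ)*a'*(c:ℂ)^2 + (b:ℂ)*b'*(s:ℂ)^2) * hcs'
  · linear_combination ((c:ℂ)*s*((a:ℂ)*a' - (b:ℂ)*b')) * hcs'
  · linear_combination ((c:ℂ)*s*((a:ℂ)*a' - (b:ℂ)*b')) * hcs'
  · linear_combination ((a:ℂ)*a'*(s:ℂ)^2 + (b:ℂ)*b'*(c:ℂ)^2) * hcs'

lemma rot_one {c s : ℝ} (hcs : c^2 + s^2 = 1) : rot 1 1 c s = 1 := by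
  have hcs' : (c:ℂ)^2 + (s:ℂ)^2 = 1 := by exact_mod_cast hcs
  ext i j
  fin_cases i <;> fin_cases j <;> simp [rot, mk2, Matrix.one_apply] <;> push_cast <;>
    linear_combination hcs'

lemma rot_inv {a b c s : ℝ} (hcs : c^2 + s^2 = 1) (ha : a ≠ 0) (hb : b ≠ 0) :
    (rot a b c s)⁻¹ = rot a⁻¹ b⁻¹ c s := by
  apply Matrix.inv_eq_right_inv
  rw [rot_mul hcs, mul_inv_cancel₀ ha, mul_inv_cancel₀ hb, rot_one hcs]

lemma rot_sub_diag (A B x y c s : ℝ) :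
    rot A B c s - mk2 x 0 y
      = mk2 (c^2*A + s^2*B - x) ((A-B)*(c*s)) (s^2*A + c^2*B - y) := by
  rw [rot, mk2_sub, sub_zero]

lemma diag_sub_rot (A B x y c s : ℝ) :
    mk2 x 0 y - rot A B c s
      = mk2 (x - (c^2*A + s^2*B)) (-((A-B)*(c*s))) (y - (s^2*A + c^2*B)) := by
  rw [rot, mk2_sub, zero_sub]

lemma quad_mk2 {p r q a b : ℝ} (h1 : a + b = p + q) (h2 : a * b = p * q - r ^ 2) :
    (mk2 p r q - (a:ℂ) • 1) * (mk2 p r q - (b:ℂ) • 1) = 0 := by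
  have h1' : (a:ℂ) + b = p + q := by exact_mod_cast h1
  have h2' : (a:ℂ) * b = p * q - r ^ 2 := by exact_mod_cast h2
  ext i j
  fin_cases i <;> fin_cases j <;>
    (simp [mk2, Matrix.mul_apply, Fin.sum_univ_two, Matrix.one_apply]; push_cast)
  · linear_combination h2' - (p:ℂ) * h1'
  · linear_combination -(r:ℂ) * h1'
  · linear_combination -(r:ℂ) * h1'
  · linear_combination h2' - (q:ℂ) * h1'

section Spectrum

variable {A : Matrix (Fin 2) (Fin 2) ℂ} {a b : ℝ}

lemma quad_expand (h : (A - (a:ℂ) • 1) * (A - (b:ℂ) • 1) = 0) :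
    A * A = ((a:ℂ) + b) • A - ((a:ℂ) * b) • 1 := by
  simp only [sub_mul, mul_sub, smul_mul_assoc, mul_smul_comm, one_mul, mul_one, smul_smul] at h
  linear_combination (norm := module) h

lemma spectrum_pair (h : (A - (a:ℂ) • 1) * (A - (b:ℂ) • 1) = 0)
    {μ : ℝ} (hμ : μ ∈ spectrum ℝ A) : μ = a ∨ μ = b := by
  by_contra hc
  push_neg at hc
  obtain ⟨ha, hb⟩ := hc
  have hAA := quad_expand h
  have hμa : ((μ:ℂ) - a) ≠ 0 := sub_ne_zero.mpr (by exact_mod_cast ha)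
  have hμb : ((μ:ℂ) - b) ≠ 0 := sub_ne_zero.mpr (by exact_mod_cast hb)
  set c : ℂ := -(((μ:ℂ) - a) * ((μ:ℂ) - b)) with hcdef
  have hne : c ≠ 0 := by simpa [hcdef] using mul_ne_zero hμa hμb
  have key : ((μ:ℂ) • 1 - A) * (((a:ℂ) + b - μ) • 1 - A) = c • (1 : Matrix (Fin 2) (Fin 2) ℂ) := by
    simp only [sub_mul, mul_sub, smul_mul_assoc, mul_smul_comm, one_mul, mul_one, smul_smul]
    rw [hAA]
    match_scalars <;> ring
  have key2 : (((a:ℂ) + b - μ) • 1 - A) * ((μ:ℂ) • 1 - A) = c • (1 : Matrix (Fin 2) (Fin 2) ℂ) := by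
    simp only [sub_mul, mul_sub, smul_mul_assoc, mul_smul_comm, one_mul, mul_one, smul_smul]
    rw [hAA]
    match_scalars <;> ring
  have hunit : IsUnit (algebraMap ℝ (Matrix (Fin 2) (Fin 2) ℂ) μ - A) := by
    have halg : algebraMap ℝ (Matrix (Fin 2) (Fin 2) ℂ) μ = (μ:ℂ) • 1 := by
      rw [Algebra.algebraMap_eq_smul_one, ← algebraMap_smul ℂ (μ:ℝ) (1 : Matrix (Fin 2) (Fin 2) ℂ)]
      norm_num
    rw [halg]
    refine isUnit_iff_exists.mpr ⟨c⁻¹ • (((a:ℂ) + b - μ) • 1 - A), ?_, ?_⟩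
    · rw [mul_smul_comm, key, smul_smul, inv_mul_cancel₀ hne, one_smul]
    · rw [smul_mul_assoc, key2, smul_smul, inv_mul_cancel₀ hne, one_smul]
  exact (spectrum.notMem_iff.mpr hunit) hμ

lemma cfc_quad (hA : A.IsHermitian) (hab : a ≠ b)
    (h : (A - (a:ℂ) • 1) * (A - (b:ℂ) • 1) = 0) (f : ℝ → ℝ) :
    hA.cfc f = ((f b - (f a - f b) / (a - b) * b : ℝ)) • (1 : Matrix (Fin 2) (Fin 2) ℂ)
      + ((f a - f b) / (a - b) : ℝ) • A := by
  have hsa : IsSelfAdjoint A := hA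
  rw [← hA.cfc_eq]
  set d : ℝ := (f a - f b) / (a - b) with hd
  have h1 : cfc f A = cfc (fun t : ℝ => (f b - d * b) + d * t) A := by
    apply cfc_congr
    intro μ hμ
    rcases spectrum_pair h hμ with rfl | rfl
    · have hne : μ - b ≠ 0 := sub_ne_zero.mpr hab
      rw [hd]
      field_simp
      ring
    · simp [hd]
  have h2 : cfc (fun t : ℝ => (f b - d * b) + d * t) A
      = cfc (fun t : ℝ => d * t + (f b - d * b)) A := by
    apply cfc_congr; intro μ _; ring
  rw [h1, h2, cfc_add_const (f b - d * b) (fun t => d * t) A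
      ((continuous_const.mul continuous_id).continuousOn) hsa,
    cfc_const_mul_id d A hsa, Algebra.algebraMap_eq_smul_one]
  module

end Spectrum

lemma cfc_diag {x y : ℝ} (hxy : x ≠ y) (hH : (mk2 x 0 y).IsHermitian) (f : ℝ → ℝ) :
    hH.cfc f = mk2 (f x) 0 (f y) := by
  rw [cfc_quad hH hxy (quad_mk2 (by ring) (by ring)) f]
  have hne : ((x:ℂ) - y) ≠ 0 := sub_ne_zero.mpr (by exact_mod_cast hxy)
  have hd' : ((f x : ℂ) - f y) / ((x:ℂ) - y) * ((x:ℂ) - y) = (f x : ℂ) - f y :=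
    div_mul_cancel₀ _ hne
  ext i j
  fin_cases i <;> fin_cases j <;> simp [mk2, Matrix.one_apply, Complex.real_smul] <;>
      push_cast <;>
    linear_combination hd'

lemma cfc_rot {a b c s : ℝ} (hab : a ≠ b) (hcs : c^2 + s^2 = 1)
    (hH : (rot a b c s).IsHermitian) (f : ℝ → ℝ) :
    hH.cfc f = rot (f a) (f b) c s := by
  have hq : ((rot a b c s : Matrix (Fin 2) (Fin 2) ℂ) - (a:ℂ) • 1)
      * ((rot a b c s : Matrix (Fin 2) (Fin 2) ℂ) - (b:ℂ) • 1) = 0 := by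
    apply quad_mk2
    · linear_combination (-(a+b)) * hcs
    · linear_combination (-(a*b*(c^2+s^2+1))) * hcs
  rw [cfc_quad hH hab hq f]
  have hne : ((a:ℂ) - b) ≠ 0 := sub_ne_zero.mpr (by exact_mod_cast hab)
  have hd' : ((f a : ℂ) - f b) / ((a:ℂ) - b) * ((a:ℂ) - b) = (f a : ℂ) - f b :=
    div_mul_cancel₀ _ hne
  have hcs' : (c:ℂ)^2 + (s:ℂ)^2 = 1 := by exact_mod_cast hcs
  ext i j
  fin_cases i <;> fin_cases j <;> simp [rot, mk2, Matrix.one_apply, Complex.real_smul] <;>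
      push_cast <;>
    first
      | linear_combination ((c:ℂ)*(s:ℂ)) * hd'
      | linear_combination ((c:ℂ)^2) * hd'
          + (((f a : ℂ) - (f b :ℂ)) / ((a:ℂ) - (b:ℂ)) * (b:ℂ) - (f b : ℂ)) * hcs'
      | linear_combination ((s:ℂ)^2) * hd'
          + (((f a : ℂ) - (f b:ℂ)) / ((a:ℂ) - (b:ℂ)) * (b:ℂ) - (f b : ℂ)) * hcs'

lemma pos_combo {a b c s : ℝ} (ha : 0 < a) (hb : 0 < b) (hcs : c^2 + s^2 = 1) :
    0 < c^2*a + s^2*b := by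
  nlinarith [mul_nonneg (sq_nonneg c) (sub_nonneg.mpr (min_le_left a b)),
    mul_nonneg (sq_nonneg s) (sub_nonneg.mpr (min_le_right a b)),
    lt_min ha hb, sq_nonneg c, sq_nonneg s]

lemma posDef_diag {x y : ℝ} (hx : 0 < x) (hy : 0 < y) : (mk2 x 0 y).PosDef := by
  apply posDef_mk2 hx
  nlinarith [mul_pos hx hy]

lemma posDef_rot {a b c s : ℝ} (ha : 0 < a) (hb : 0 < b) (hcs : c^2 + s^2 = 1) :
    (rot a b c s).PosDef := by
  apply posDef_mk2 (pos_combo ha hb hcs)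
  have hdet : (c^2*a + s^2*b) * (s^2*a + c^2*b) - ((a-b)*(c*s))^2 = a*b := by
    linear_combination (a*b*(c^2+s^2+1)) * hcs
  rw [hdet]
  exact mul_pos ha hb

lemma inv_antitone {A B : Matrix (Fin 2) (Fin 2) ℂ} (hA : A.PosDef) (hB : B.PosDef)
    (h : (B - A).PosSemidef) : (A⁻¹ - B⁻¹).PosSemidef := by
  have hAd : IsUnit A.det := hA.det_pos.ne'.isUnit
  have hBd : IsUnit B.det := hB.det_pos.ne'.isUnit
  have hA1 : A * A⁻¹ = 1 := Matrix.mul_nonsing_inv _ hAd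
  have hA2 : A⁻¹ * A = 1 := Matrix.nonsing_inv_mul _ hAd
  have hB1 : B * B⁻¹ = 1 := Matrix.mul_nonsing_inv _ hBd
  have hB2 : B⁻¹ * B = 1 := Matrix.nonsing_inv_mul _ hBd
  have e1 : B⁻¹ * (B - A) = 1 - B⁻¹ * A := by rw [mul_sub, hB2]
  have e2 : (B - A) * B⁻¹ = 1 - A * B⁻¹ := by rw [sub_mul, hB1]
  have e3 : A⁻¹ * ((B - A) * B⁻¹) = A⁻¹ - B⁻¹ := by
    rw [e2, mul_sub, mul_one, ← mul_assoc, hA2, one_mul]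
  have key : A⁻¹ - B⁻¹ = B⁻¹ * (B - A) * B⁻¹
      + (B⁻¹ * (B - A)) * (A⁻¹ * ((B - A) * B⁻¹)) := by
    rw [e3, e1]
    simp only [sub_mul, mul_sub, one_mul, mul_one, mul_assoc, hA1]
    abel
  have p1 : (B⁻¹ * (B - A) * B⁻¹).PosSemidef := by
    have := h.conjTranspose_mul_mul_same (B := B⁻¹)
    rwa [hB.inv.1] at this
  have p2 : ((B⁻¹ * (B - A)) * (A⁻¹ * ((B - A) * B⁻¹))).PosSemidef := by
    have := hA.inv.posSemidef.conjTranspose_mul_mul_same (B := (B - A) * B⁻¹)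
    have hct : ((B - A) * B⁻¹)ᴴ = B⁻¹ * (B - A) := by
      rw [Matrix.conjTranspose_mul, h.1, hB.inv.1]
    rw [hct, mul_assoc] at this
    exact this
  rw [key]
  exact p1.add p2


lemma core_U {f : ℝ → ℝ} (hmono : OperatorMonotoneOn f)
    {x y α β c s : ℝ} (hx : 0 < x) (hy : 0 < y) (hα : 0 < α) (hβ : 0 < β)
    (hxy : x ≠ y) (hαβ : α ≠ β) (hcs : c^2 + s^2 = 1)
    (hpsd : (rot α β c s - mk2 x 0 y).PosSemidef) :
    c^2 * f x + s^2 * f y ≤ f α := by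
  have hM : (mk2 x 0 y).PosDef := posDef_diag hx hy
  have hN : (rot α β c s).PosDef := posDef_rot hα hβ hcs
  have h2 := hmono 2 (mk2 x 0 y) (rot α β c s) hM hN hpsd
  rw [cfc_diag hxy hM.1 f, cfc_rot hαβ hcs hN.1 f, rot_sub_diag] at h2
  have key := mk2_quadform h2 c s
  have hid : (c^2*f α + s^2*f β - f x) * c ^ 2 + 2 * ((f α - f β)*(c*s)) * c * s
      + (s^2*f α + c^2*f β - f y) * s ^ 2 = f α - (c^2*f x + s^2*f y) := by
    linear_combination ((f α)*(c^2+s^2+1)) * hcs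
  rw [hid] at key
  linarith

lemma core_g {f : ℝ → ℝ} (hfpos : ∀ t : ℝ, 0 < t → 0 < f t) (hmono : OperatorMonotoneOn f)
    {x y α β c s : ℝ} (hx : 0 < x) (hy : 0 < y) (hα : 0 < α) (hβ : 0 < β)
    (hxy : x ≠ y) (hαβ : α ≠ β) (hcs : c^2 + s^2 = 1)
    (hpsd : (mk2 x 0 y - rot α β c s).PosSemidef) :
    c^2 * (f x)⁻¹ + s^2 * (f y)⁻¹ ≤ (f α)⁻¹ := by
  have hM : (mk2 x 0 y).PosDef := posDef_diag hx hy
  have hN : (rot α β c s).PosDef := posDef_rot hα hβ hcs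
  have h2 := hmono 2 (rot α β c s) (mk2 x 0 y) hN hM hpsd
  rw [cfc_diag hxy hM.1 f, cfc_rot hαβ hcs hN.1 f] at h2
  have hRpd : (rot (f α) (f β) c s).PosDef := posDef_rot (hfpos α hα) (hfpos β hβ) hcs
  have hDpd : (mk2 (f x) 0 (f y)).PosDef := posDef_diag (hfpos x hx) (hfpos y hy)
  have h3 := inv_antitone hRpd hDpd h2
  rw [rot_inv hcs (hfpos α hα).ne' (hfpos β hβ).ne',
    diag_inv (hfpos x hx).ne' (hfpos y hy).ne', rot_sub_diag] at h3
  have key := mk2_quadform h3 c s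
  have hid : (c^2*(f α)⁻¹ + s^2*(f β)⁻¹ - (f x)⁻¹) * c ^ 2
      + 2 * (((f α)⁻¹ - (f β)⁻¹)*(c*s)) * c * s
      + (s^2*(f α)⁻¹ + c^2*(f β)⁻¹ - (f y)⁻¹) * s ^ 2
      = (f α)⁻¹ - (c^2*(f x)⁻¹ + s^2*(f y)⁻¹) := by
    linear_combination ((f α)⁻¹*(c^2+s^2+1)) * hcs
  rw [hid] at key
  linarith

lemma mono_f {f : ℝ → ℝ} (hmono : OperatorMonotoneOn f) :
    ∀ a b : ℝ, 0 < a → a ≤ b → f a ≤ f b := by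
  intro a b ha hab
  rcases eq_or_lt_of_le hab with rfl | h
  · exact le_refl _
  have hb : 0 < b := ha.trans h
  have hw : 0 < a + b + 1 := by linarith
  have haw : a ≠ a + b + 1 := by intro hh; linarith
  have hbw : b ≠ a + b + 1 := by intro hh; linarith
  have hA : (mk2 a 0 (a+b+1)).PosDef := posDef_diag ha hw
  have hB : (mk2 b 0 (a+b+1)).PosDef := posDef_diag hb hw
  have hpsd : (mk2 b 0 (a+b+1) - mk2 a 0 (a+b+1)).PosSemidef := by
    have e : mk2 b 0 (a+b+1) - mk2 a 0 (a+b+1) = mk2 (b-a) 0 0 := by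
      rw [mk2_sub]
      norm_num
    rw [e]
    exact posSemidef_mk2 (sub_pos.mpr h) (by norm_num)
  have h2 := hmono 2 (mk2 a 0 (a+b+1)) (mk2 b 0 (a+b+1)) hA hB hpsd
  rw [cfc_diag haw hA.1 f, cfc_diag hbw hB.1 f, mk2_sub] at h2
  have key := mk2_quadform h2 1 0
  nlinarith [key]

lemma exU {x y c s α : ℝ} (hx : 0 < x) (hy : 0 < y) (hc : 0 < c) (hs : 0 < s)
    (hcs : c^2 + s^2 = 1) (hα : c^2*x + s^2*y < α) :
    ∃ β : ℝ, 0 < β ∧ α ≠ β ∧ (rot α β c s - mk2 x 0 y).PosSemidef := by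
  have hm : 0 < c^2*x + s^2*y := pos_combo hx hy hcs
  have hD : 0 < c^2*y + s^2*x := pos_combo hy hx hcs
  have hα0 : 0 < α := hm.trans hα
  have hs2 : 0 < s^2 := pow_pos hs 2
  have hαm : 0 < α - (c^2*x + s^2*y) := sub_pos.mpr hα
  set β := max (α*(c^2*y + s^2*x)/(α - (c^2*x + s^2*y))) (x/s^2 + α + 1) with hβdef
  have hβ2 : x/s^2 + α + 1 ≤ β := le_max_right _ _
  have hβ1 : α*(c^2*y + s^2*x)/(α - (c^2*x + s^2*y)) ≤ β := le_max_left _ _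
  have hxs : 0 < x/s^2 := div_pos hx hs2
  have hβ0 : 0 < β := by
    have : 0 < x/s^2 + α + 1 := by linarith
    linarith
  have hαβ : α ≠ β := by
    have : α < β := by linarith
    exact this.ne
  refine ⟨β, hβ0, hαβ, ?_⟩
  rw [rot_sub_diag]
  apply posSemidef_mk2
  · have h6 : s^2*(x/s^2 + α + 1) ≤ s^2*β := mul_le_mul_of_nonneg_left hβ2 hs2.le
    have e : s^2*(x/s^2 + α + 1) = x + s^2*(α+1) := by field_simp; ring
    nlinarith [mul_nonneg (sq_nonneg c) hα0.le, mul_pos hs2 (show (0:ℝ) < α + 1 by linarith)]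
  · have hdet : (c^2*α + s^2*β - x)*(s^2*α + c^2*β - y) - ((α-β)*(c*s))^2
        = α*β - α*(c^2*y + s^2*x) - β*(c^2*x + s^2*y) + x*y := by
      linear_combination (α*β*(c^2+s^2+1)) * hcs
    rw [hdet]
    have h7 : α*(c^2*y + s^2*x) ≤ β*(α - (c^2*x + s^2*y)) := by
      rw [div_le_iff₀ hαm] at hβ1
      linarith
    nlinarith [mul_pos hx hy, h7]

lemma exL {x y c s α : ℝ} (hx : 0 < x) (hy : 0 < y) (hc : 0 < c) (hs : 0 < s)
    (hcs : c^2 + s^2 = 1) (hα0 : 0 < α) (hαh : α*(c^2*y + s^2*x) < x*y) :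
    ∃ β : ℝ, 0 < β ∧ α ≠ β ∧ (mk2 x 0 y - rot α β c s).PosSemidef := by
  have hm : 0 < c^2*x + s^2*y := pos_combo hx hy hcs
  have hD : 0 < c^2*y + s^2*x := pos_combo hy hx hcs
  have hs2 : 0 < s^2 := pow_pos hs 2
  have hc2 : 0 < c^2 := pow_pos hc 2
  have hcα : c^2*α < x := by
    have h1 : c^2*(α*(c^2*y+s^2*x)) < c^2*(x*y) := mul_lt_mul_of_pos_left hαh hc2
    have h2 : c^2*(x*y) < x*(c^2*y+s^2*x) := by nlinarith [mul_pos (mul_pos hx hx) hs2]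
    have h3 : c^2*α*(c^2*y+s^2*x) < x*(c^2*y+s^2*x) := by nlinarith
    exact lt_of_mul_lt_mul_right h3 hD.le
  set β := min ((x*y - α*(c^2*y + s^2*x))/((c^2*x + s^2*y)+1))
      (min ((x - c^2*α)/(2*s^2)) (α/2)) with hβdef
  have hβa : β ≤ (x*y - α*(c^2*y + s^2*x))/((c^2*x + s^2*y)+1) := min_le_left _ _
  have hβb : β ≤ (x - c^2*α)/(2*s^2) := le_trans (min_le_right _ _) (min_le_left _ _)
  have hβc : β ≤ α/2 := le_trans (min_le_right _ _) (min_le_right _ _)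
  have hβ0 : 0 < β := by
    apply lt_min
    · exact div_pos (by linarith) (by linarith)
    · exact lt_min (div_pos (by linarith) (by linarith)) (by linarith)
  have hαβ : α ≠ β := by
    have : β < α := by linarith
    exact this.ne'
  refine ⟨β, hβ0, hαβ, ?_⟩
  rw [diag_sub_rot]
  apply posSemidef_mk2
  · have h6 : s^2*β ≤ s^2*((x - c^2*α)/(2*s^2)) := mul_le_mul_of_nonneg_left hβb hs2.le
    have e : s^2*((x - c^2*α)/(2*s^2)) = (x - c^2*α)/2 := by field_simp
    nlinarith
  · have hdet : (x - (c^2*α + s^2*β))*(y - (s^2*α + c^2*β)) - (-((α-β)*(c*s)))^2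
        = α*β - α*(c^2*y + s^2*x) - β*(c^2*x + s^2*y) + x*y := by
      linear_combination (α*β*(c^2+s^2+1)) * hcs
    rw [hdet]
    have h7 : β*((c^2*x + s^2*y)+1) ≤ x*y - α*(c^2*y + s^2*x) := by
      rw [le_div_iff₀ (by linarith : (0:ℝ) < (c^2*x + s^2*y)+1)] at hβa
      linarith
    nlinarith [mul_pos hα0 hβ0]

end OpMono15

open OpMono15 in
/-- every normalized symmetric operator monotone function `f` on `(0,∞)` lies
between the harmonic and the arithmetic means: `2x/(1+x) ≤ f(x) ≤ (1+x)/2` for `x > 0`. -/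
theorem operatorMonotone_between_harmonic_arithmetic
    (f : ℝ → ℝ) (hfpos : ∀ x : ℝ, 0 < x → 0 < f x)
    (hmono : OperatorMonotoneOn f)
    (hsymm : ∀ x : ℝ, 0 < x → f x = x * f (1 / x))
    (hnorm : f 1 = 1) :
    ∀ x : ℝ, 0 < x → 2 * x / (1 + x) ≤ f x ∧ f x ≤ (1 + x) / 2 := by
  intro x hx
  have hx1 : (0:ℝ) < 1 + x := by linarith
  have hx1ne : (1:ℝ) + x ≠ 0 := hx1.ne'
  have hfx : 0 < f x := hfpos x hx
  have hinvx : 0 < 1/x := by positivity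
  have hfinv : f (1/x) = f x / x := by
    rw [hsymm x hx]
    field_simp
  have monf := OpMono15.mono_f hmono
  have hle : ∀ a : ℝ, 1 ≤ a → f a ≤ a := by
    intro a ha
    have ha0 : 0 < a := by linarith
    have h1 : f (1/a) ≤ f 1 := by
      rcases eq_or_lt_of_le ha with rfl | h
      · norm_num
      · exact monf (1/a) 1 (by positivity) (by rw [div_le_one ha0]; linarith)
    calc f a = a * f (1/a) := hsymm a ha0
      _ ≤ a * f 1 := mul_le_mul_of_nonneg_left h1 ha0.le
      _ = a := by rw [hnorm]; ring
  have hge : ∀ a : ℝ, 0 < a → a ≤ 1 → a ≤ f a := by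
    intro a ha0 ha
    have h1 : f 1 ≤ f (1/a) := monf 1 (1/a) one_pos (by rw [le_div_iff₀ ha0]; linarith)
    calc a = a * f 1 := by rw [hnorm]; ring
      _ ≤ a * f (1/a) := mul_le_mul_of_nonneg_left h1 ha0.le
      _ = f a := (hsymm a ha0).symm
  rcases eq_or_ne x 1 with rfl | hne1
  · rw [hnorm]; norm_num
  have hxinv_ne : x ≠ 1/x := by
    intro h
    have h2 : x*x = 1 := by
      field_simp at h
      nlinarith [h]
    have h3 : (x-1)*(x+1) = 0 := by linear_combination h2
    rcases mul_eq_zero.mp h3 with h4 | h4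
    · exact hne1 (by linarith)
    · linarith
  constructor
  · -- lower bound
    have hc : 0 < Real.sqrt (x/(1+x)) := Real.sqrt_pos.mpr (by positivity)
    have hs : 0 < Real.sqrt (1/(1+x)) := Real.sqrt_pos.mpr (by positivity)
    have hc2 : Real.sqrt (x/(1+x))^2 = x/(1+x) := Real.sq_sqrt (by positivity)
    have hs2 : Real.sqrt (1/(1+x))^2 = 1/(1+x) := Real.sq_sqrt (by positivity)
    have hcs : Real.sqrt (x/(1+x))^2 + Real.sqrt (1/(1+x))^2 = 1 := by
      rw [hc2, hs2]; field_simp; try ring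
    have hD : Real.sqrt (x/(1+x))^2*(1/x) + Real.sqrt (1/(1+x))^2*x = 1 := by
      rw [hc2, hs2]; field_simp; try ring
    have key : ∀ δ : ℝ, 0 < δ → δ < 1 → 2*x/((1+x)*f x) ≤ (f δ)⁻¹ := by
      intro δ hδ0 hδ1
      obtain ⟨β, hβ0, hαβ, hpsd⟩ := OpMono15.exL hx hinvx hc hs hcs hδ0
        (by
          have e1 : x*(1/x) = 1 := by field_simp
          calc δ*(Real.sqrt (x/(1+x))^2*(1/x) + Real.sqrt (1/(1+x))^2*x) = δ := by
                rw [hD]; ring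
            _ < 1 := hδ1
            _ = x*(1/x) := e1.symm)
      have hcore := OpMono15.core_g hfpos hmono hx hinvx hδ0 hβ0 hxinv_ne hαβ hcs hpsd
      have hval : Real.sqrt (x/(1+x))^2*(f x)⁻¹ + Real.sqrt (1/(1+x))^2*(f (1/x))⁻¹
          = 2*x/((1+x)*f x) := by
        rw [hfinv, hc2, hs2]
        field_simp
        ring
      rwa [hval] at hcore
    have hL : 2*x/((1+x)*f x) ≤ 1 := by
      by_contra hL
      push_neg at hL
      have hLpos : 0 < 2*x/((1+x)*f x) := by positivity
      have h1 : 1/(2*x/((1+x)*f x)) < 1 := by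
        rw [div_lt_one hLpos]; linarith
      have h1' : 0 < 1/(2*x/((1+x)*f x)) := by positivity
      set δ := (1/(2*x/((1+x)*f x)) + 1)/2 with hδdef
      have hδ0 : 0 < δ := by rw [hδdef]; linarith
      have hδ1 : δ < 1 := by rw [hδdef]; linarith
      have h2 := key δ hδ0 hδ1
      have h3 : (f δ)⁻¹ ≤ δ⁻¹ := by
        have h4 := hge δ hδ0 hδ1.le
        have h5 : 0 < f δ := hfpos δ hδ0
        exact inv_anti₀ hδ0 h4
      have h6 : δ⁻¹ < 2*x/((1+x)*f x) := by
        have h7 : (1/(2*x/((1+x)*f x))) < δ := by rw [hδdef]; linarith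
        have h8 := inv_strictAnti₀ h1' h7
        rwa [one_div, inv_inv] at h8
      linarith
    rw [div_le_one (by positivity)] at hL
    rw [div_le_iff₀ hx1]
    linarith
  · -- upper bound
    have hc : 0 < Real.sqrt (1/(1+x)) := Real.sqrt_pos.mpr (by positivity)
    have hs : 0 < Real.sqrt (x/(1+x)) := Real.sqrt_pos.mpr (by positivity)
    have hc2 : Real.sqrt (1/(1+x))^2 = 1/(1+x) := Real.sq_sqrt (by positivity)
    have hs2 : Real.sqrt (x/(1+x))^2 = x/(1+x) := Real.sq_sqrt (by positivity)
    have hcs : Real.sqrt (1/(1+x))^2 + Real.sqrt (x/(1+x))^2 = 1 := by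
      rw [hc2, hs2]; field_simp; try ring
    have hm : Real.sqrt (1/(1+x))^2*x + Real.sqrt (x/(1+x))^2*(1/x) = 1 := by
      rw [hc2, hs2]; field_simp; try ring
    have key : ∀ α : ℝ, 1 < α → 2*f x/(1+x) ≤ α := by
      intro α hα
      have hα0 : (0:ℝ) < α := by linarith
      obtain ⟨β, hβ0, hαβ, hpsd⟩ := OpMono15.exU hx hinvx hc hs hcs (by rw [hm]; exact hα)
      have hcore := OpMono15.core_U hmono hx hinvx hα0 hβ0 hxinv_ne hαβ hcs hpsd
      have hval : Real.sqrt (1/(1+x))^2*f x + Real.sqrt (x/(1+x))^2*f (1/x)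
          = 2*f x/(1+x) := by
        rw [hfinv, hc2, hs2]
        field_simp
        ring
      rw [hval] at hcore
      have hfα : f α ≤ α := hle α hα.le
      linarith
    have hU : 2*f x/(1+x) ≤ 1 := by
      by_contra h
      push_neg at h
      have h2 := key ((1 + 2*f x/(1+x))/2) (by linarith)
      linarith
    rw [div_le_one hx1] at hU
    linarith
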